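/- Almost surely, for every k ∈ {1,…,n} and every i ∈ {1,2}, the event Î_k = i implies I_k = i; that is, all observations receiving a nonzero predicted label are correctly classified, and misclassified observations can only receive the label 0. -/

import Mathlib

open MeasureTheory ProbabilityTheory

/-- In the two-component uniform mixture with overlap `λ` and the plug-in rule based on
`λ̂ = 2 − max_k X_k`, almost surely every observation receiving a nonzero predicted label
is correctly classified: `Î_k = i` implies `I_k = i` for `i ∈ {1,2}`. -/
theorem stmt_4 {Ω : Type*} [MeasurableSpace Ω] (P : Measure Ω) [IsProbabilityMeasure P]
    (n : ℕ) (hn : 1 ≤ n) (lam : ℝ) (hlam : lam ∈ Set.Ioo (0 : ℝ) 1)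
    (X : Fin n → Ω → ℝ) (I : Fin n → Ω → ℕ)
    (hXmeas : ∀ k, Measurable (X k)) (hImeas : ∀ k, Measurable (I k))
    (hIrange : ∀ k ω, I k ω = 1 ∨ I k ω = 2)
    -- the pairs (X_k, I_k) are i.i.d.
    (hindep : iIndepFun (fun k ω => (X k ω, I k ω)) P)
    (hident : ∀ k : Fin n,
      Measure.map (fun ω => (X k ω, I k ω)) P
        = Measure.map (fun ω => (X ⟨0, hn⟩ ω, I ⟨0, hn⟩ ω)) P)
    -- mixture weights
    (α : ℕ → ℝ) (hα : ∀ i, α i = (P {ω | I ⟨0, hn⟩ ω = i}).toReal)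
    (hα1 : α 1 ∈ Set.Ioo (0 : ℝ) 1) (hα2 : α 2 ∈ Set.Ioo (0 : ℝ) 1)
    -- conditional densities: g₁ = 1_{[0,1]} and g₂ = 1_{[1−λ, 2−λ]}
    (hg1 : ∀ s : Set ℝ, MeasurableSet s →
      (P ({ω | I ⟨0, hn⟩ ω = 1} ∩ (X ⟨0, hn⟩) ⁻¹' s)).toReal
        = α 1 * ∫ t in s, (Set.Icc (0 : ℝ) 1).indicator (fun _ => (1 : ℝ)) t)
    (hg2 : ∀ s : Set ℝ, MeasurableSet s →
      (P ({ω | I ⟨0, hn⟩ ω = 2} ∩ (X ⟨0, hn⟩) ⁻¹' s)).toReal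
        = α 2 * ∫ t in s, (Set.Icc (1 - lam) (2 - lam)).indicator (fun _ => (1 : ℝ)) t)
    -- plug-in estimate of λ and predicted labels
    (lamhat : Ω → ℝ)
    (hlamhat : ∀ ω, lamhat ω
      = 2 - Finset.univ.sup' ⟨⟨0, hn⟩, Finset.mem_univ _⟩ (fun k => X k ω))
    (Ihat : Fin n → Ω → ℕ)
    (hIhat : ∀ k ω, Ihat k ω =
      if 1 ≤ X k ω then 2 else if X k ω ≤ 1 - lamhat ω then 1 else 0) :
    ∀ᵐ ω ∂P, ∀ k : Fin n, ∀ i : ℕ, (i = 1 ∨ i = 2) → Ihat k ω = i → I k ω = i := by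
  obtain ⟨hlam0, hlam1⟩ := hlam
  set k0 : Fin n := ⟨0, hn⟩ with hk0
  have hfmeas : ∀ k : Fin n, Measurable (fun ω => (X k ω, I k ω)) :=
    fun k => (hXmeas k).prodMk (hImeas k)
  have htrans : ∀ (s : Set (ℝ × ℕ)), MeasurableSet s →
      P ((fun ω => (X k0 ω, I k0 ω)) ⁻¹' s) = 0 →
      ∀ k, P ((fun ω => (X k ω, I k ω)) ⁻¹' s) = 0 := by
    intro s hs h0 k
    rw [← Measure.map_apply (hfmeas k) hs, hident k,
      Measure.map_apply (hfmeas k0) hs]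
    exact h0
  have hzero : ∀ (E : Set Ω), (P E).toReal = 0 → P E = 0 := by
    intro E hE
    have hfin := measure_ne_top P E
    rcases (ENNReal.toReal_eq_zero_iff _).mp hE with h | h
    · exact h
    · exact absurd h hfin
  -- integral computations
  have hint1 : (∫ t in Set.Ici (1:ℝ),
      (Set.Icc (0 : ℝ) 1).indicator (fun _ => (1 : ℝ)) t) = 0 := by
    rw [setIntegral_indicator measurableSet_Icc]
    have h : Set.Ici (1:ℝ) ∩ Set.Icc 0 1 = Set.Icc 1 1 := by
      ext t; simp only [Set.mem_inter_iff, Set.mem_Ici, Set.mem_Icc]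
      constructor
      · rintro ⟨h1, h2, h3⟩; exact ⟨h1, h3⟩
      · rintro ⟨h1, h2⟩; exact ⟨h1, by linarith, h2⟩
    rw [h, setIntegral_const]
    simp [Real.volume_Icc, Measure.real]
  have hint2 : (∫ t in Set.Iio (1 - lam),
      (Set.Icc (1 - lam) (2 - lam)).indicator (fun _ => (1 : ℝ)) t) = 0 := by
    rw [setIntegral_indicator measurableSet_Icc]
    have h : Set.Iio (1 - lam) ∩ Set.Icc (1 - lam) (2 - lam) = ∅ := by
      ext t; simp only [Set.mem_inter_iff, Set.mem_Iio, Set.mem_Icc, Set.mem_empty_iff_false,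
        iff_false, not_and]
      intro h1 h2; exact absurd h2 (not_le.mpr h1)
    rw [h]; simp
  have hint3 : (∫ t in Set.Ici (2 - lam),
      (Set.Icc (0 : ℝ) 1).indicator (fun _ => (1 : ℝ)) t) = 0 := by
    rw [setIntegral_indicator measurableSet_Icc]
    have h : Set.Ici (2 - lam) ∩ Set.Icc (0:ℝ) 1 = ∅ := by
      ext t; simp only [Set.mem_inter_iff, Set.mem_Ici, Set.mem_Icc, Set.mem_empty_iff_false,
        iff_false, not_and]
      intro h1 h2; intro h3; linarith [h3]
    rw [h]; simp
  have hint4 : (∫ t in Set.Ici (2 - lam),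
      (Set.Icc (1 - lam) (2 - lam)).indicator (fun _ => (1 : ℝ)) t) = 0 := by
    rw [setIntegral_indicator measurableSet_Icc]
    have h : Set.Ici (2 - lam) ∩ Set.Icc (1 - lam) (2 - lam)
        = Set.Icc (2 - lam) (2 - lam) := by
      ext t; simp only [Set.mem_inter_iff, Set.mem_Ici, Set.mem_Icc]
      constructor
      · rintro ⟨h1, h2, h3⟩; exact ⟨h1, h3⟩
      · rintro ⟨h1, h2⟩; exact ⟨h1, by linarith, h2⟩
    rw [h, setIntegral_const]
    simp [Real.volume_Icc, Measure.real]
  -- null events for index k0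
  have hE1 : P ({ω | I k0 ω = 1} ∩ (X k0) ⁻¹' Set.Ici 1) = 0 := by
    apply hzero
    rw [hg1 _ measurableSet_Ici, hint1, mul_zero]
  have hE2 : P ({ω | I k0 ω = 2} ∩ (X k0) ⁻¹' Set.Iio (1 - lam)) = 0 := by
    apply hzero
    rw [hg2 _ measurableSet_Iio, hint2, mul_zero]
  have hE3 : P ((X k0) ⁻¹' Set.Ici (2 - lam)) = 0 := by
    have hsub : (X k0) ⁻¹' Set.Ici (2 - lam) ⊆
        ({ω | I k0 ω = 1} ∩ (X k0) ⁻¹' Set.Ici (2 - lam)) ∪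
        ({ω | I k0 ω = 2} ∩ (X k0) ⁻¹' Set.Ici (2 - lam)) := by
      intro ω hω
      rcases hIrange k0 ω with h | h
      · exact Or.inl ⟨h, hω⟩
      · exact Or.inr ⟨h, hω⟩
    refine measure_mono_null hsub (measure_union_null ?_ ?_)
    · apply hzero; rw [hg1 _ measurableSet_Ici, hint3, mul_zero]
    · apply hzero; rw [hg2 _ measurableSet_Ici, hint4, mul_zero]
  -- transfer null events to all k, via product-space sets
  have hS1 : ∀ k, P ((fun ω => (X k ω, I k ω)) ⁻¹' {p : ℝ × ℕ | p.2 = 1 ∧ 1 ≤ p.1}) = 0 := by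
    apply htrans
    · exact (measurable_snd (measurableSet_singleton 1)).inter
        (measurable_fst measurableSet_Ici)
    · convert hE1 using 2; rfl
  have hS2 : ∀ k, P ((fun ω => (X k ω, I k ω)) ⁻¹'
      {p : ℝ × ℕ | p.2 = 2 ∧ p.1 < 1 - lam}) = 0 := by
    apply htrans
    · exact (measurable_snd (measurableSet_singleton 2)).inter
        (measurable_fst measurableSet_Iio)
    · convert hE2 using 2; rfl
  have hS3 : ∀ k, P ((fun ω => (X k ω, I k ω)) ⁻¹' {p : ℝ × ℕ | 2 - lam ≤ p.1}) = 0 := by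
    apply htrans
    · exact measurable_fst measurableSet_Ici
    · exact hE3
  -- assemble the a.e. statement
  have hae : ∀ᵐ ω ∂P, ∀ k : Fin n,
      ¬(I k ω = 1 ∧ 1 ≤ X k ω) ∧ ¬(I k ω = 2 ∧ X k ω < 1 - lam) ∧ X k ω < 2 - lam := by
    rw [ae_all_iff]
    intro k
    have h1 := (measure_eq_zero_iff_ae_notMem.mp (hS1 k))
    have h2 := (measure_eq_zero_iff_ae_notMem.mp (hS2 k))
    have h3 := (measure_eq_zero_iff_ae_notMem.mp (hS3 k))
    filter_upwards [h1, h2, h3] with ω hω1 hω2 hω3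
    refine ⟨?_, ?_, ?_⟩
    · intro ⟨ha, hb⟩; exact hω1 ⟨ha, hb⟩
    · intro ⟨ha, hb⟩; exact hω2 ⟨ha, hb⟩
    · by_contra h; exact hω3 (not_lt.mp h)
  filter_upwards [hae] with ω hω k i hi hIk
  have hmem : k0 ∈ (Finset.univ : Finset (Fin n)) := Finset.mem_univ _
  set M := Finset.univ.sup' ⟨k0, Finset.mem_univ _⟩ (fun k => X k ω) with hM
  rcases hi with rfl | rfl
  · -- predicted 1
    rw [hIhat] at hIk
    by_cases hx1 : 1 ≤ X k ω
    · simp [hx1] at hIk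
    · rw [if_neg hx1] at hIk
      by_cases hx2 : X k ω ≤ 1 - lamhat ω
      · -- X k ω ≤ M - 1
        rcases hIrange k ω with h | h
        · exact h
        · exfalso
          have hxk : 1 - lam ≤ X k ω := by
            by_contra hc
            exact (hω k).2.1 ⟨h, not_le.mp hc⟩
          have hMge : 2 - lam ≤ M := by
            rw [hlamhat ω] at hx2
            linarith
          obtain ⟨j, _, hj⟩ := Finset.exists_mem_eq_sup'
            (⟨k0, Finset.mem_univ _⟩ : (Finset.univ : Finset (Fin n)).Nonempty)
            (fun k => X k ω)
          have := (hω j).2.2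
          rw [hM, hj] at hMge
          linarith
      · rw [if_neg hx2] at hIk
        exact absurd hIk (by norm_num)
  · -- predicted 2
    rw [hIhat] at hIk
    by_cases hx1 : 1 ≤ X k ω
    · rcases hIrange k ω with h | h
      · exact absurd ⟨h, hx1⟩ (hω k).1
      · exact h
    · rw [if_neg hx1] at hIk
      by_cases hx2 : X k ω ≤ 1 - lamhat ω
      · rw [if_pos hx2] at hIk; exact absurd hIk (by norm_num)
      · rw [if_neg hx2] at hIk; exact absurd hIk (by norm_num)
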